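/- Let (Θ, 𝓕, P) be a probability space, Ω a Polish space, and y, v: Θ → Ω random variables. Let Λ: Θ → [0,∞) be measurable with E[Λ] = 1, Λ > 0 P-a.s., and suppose E[Λ φ(y)] = E[φ(v)] for every bounded continuous φ: Ω → ℝ. Then the laws μ_y and μ_v are mutually absolutely continuous; moreover, if λ: Ω → [0,∞) is a measurable function with E(Λ | σ(y)) = λ(y) P-a.s., then dμ_v/dμ_y = λ holds μ_y-a.e., λ > 0 μ_y-a.e., and (dμ_y/dμ_v)(y) = 1/E(Λ | σ(y)) P-a.s. -/

import Mathlib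

open MeasureTheory ProbabilityTheory
open scoped ENNReal NNReal

/-- If `Λ ≥ 0` has `E[Λ] = 1`, `Λ > 0` a.s., and `E[Λ φ(y)] = E[φ(v)]` for all
bounded continuous `φ`, then the laws of `y` and `v` are mutually absolutely continuous, and if
`λ` represents `E(Λ | σ(y))` via `λ(y)`, then `dμ_v/dμ_y = λ` holds `μ_y`-a.e., `λ > 0` `μ_y`-a.e.,
and `(dμ_y/dμ_v)(y) = 1/E(Λ | σ(y))` `P`-a.s. -/
theorem girsanov_change_of_variable_rnDeriv
    {Θ Ω : Type*} [MeasurableSpace Θ]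
    [MetricSpace Ω] [PolishSpace Ω] [MeasurableSpace Ω] [BorelSpace Ω]
    (P : Measure Θ) [IsProbabilityMeasure P]
    (y v : Θ → Ω) (hy : Measurable y) (hv : Measurable v)
    (Λ : Θ → ℝ) (hΛmeas : Measurable Λ) (hΛnonneg : ∀ θ, 0 ≤ Λ θ)
    (hΛmean : ∫ θ, Λ θ ∂P = 1) (hΛpos : ∀ᵐ θ ∂P, 0 < Λ θ)
    (hgirsanov : ∀ φ : Ω → ℝ, Continuous φ → (∃ C, ∀ ω, |φ ω| ≤ C) →
      ∫ θ, Λ θ * φ (y θ) ∂P = ∫ θ, φ (v θ) ∂P)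
    (lam : Ω → ℝ) (hlam_meas : Measurable lam)
    (hlam : (P[Λ | MeasurableSpace.comap y inferInstance]) =ᵐ[P] fun θ => lam (y θ)) :
    (P.map v ≪ P.map y ∧ P.map y ≪ P.map v) ∧
      (∀ᵐ ω ∂(P.map y), (P.map v).rnDeriv (P.map y) ω = ENNReal.ofReal (lam ω)) ∧
      (∀ᵐ ω ∂(P.map y), 0 < lam ω) ∧
      (∀ᵐ θ ∂P, (P.map y).rnDeriv (P.map v) (y θ)
        = (ENNReal.ofReal ((P[Λ | MeasurableSpace.comap y inferInstance]) θ))⁻¹) := by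
  have hm : (MeasurableSpace.comap y inferInstance : MeasurableSpace Θ) ≤ ‹MeasurableSpace Θ› :=
    hy.comap_le
  haveI : IsProbabilityMeasure (P.map y) := Measure.isProbabilityMeasure_map hy.aemeasurable
  haveI : IsProbabilityMeasure (P.map v) := Measure.isProbabilityMeasure_map hv.aemeasurable
  -- Λ is integrable
  have hΛint : Integrable Λ P := by
    by_contra h
    rw [integral_undef h] at hΛmean
    norm_num at hΛmean
  -- lam ∘ y is a.e. nonneg and integrable
  have hlamy_nonneg : ∀ᵐ θ ∂P, 0 ≤ lam (y θ) := by
    filter_upwards [hlam, condExp_nonneg (m := MeasurableSpace.comap y inferInstance) (μ := P)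
      (Filter.Eventually.of_forall hΛnonneg)] with θ h1 h2
    rw [← h1]; exact h2
  have hlamy_int : Integrable (fun θ => lam (y θ)) P :=
    (integrable_condExp (m := MeasurableSpace.comap y inferInstance) (f := Λ)).congr hlam
  -- key: replacing Λ by lam ∘ y under bounded measurable weights
  have hkey : ∀ φ : Ω → ℝ, Measurable φ → (∃ C, ∀ ω, |φ ω| ≤ C) →
      ∫ θ, Λ θ * φ (y θ) ∂P = ∫ θ, lam (y θ) * φ (y θ) ∂P := by
    rintro φ hφ ⟨C, hC⟩
    have hφy : StronglyMeasurable[MeasurableSpace.comap y inferInstance] fun θ => φ (y θ) :=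
      (hφ.comp (Measurable.of_comap_le le_rfl)).stronglyMeasurable
    have hpull := condExp_stronglyMeasurable_mul_of_bound hm hφy hΛint C
      (Filter.Eventually.of_forall fun θ => by
        simpa [Real.norm_eq_abs] using hC (y θ))
    have h1 : ∫ θ, ((fun θ => φ (y θ)) * Λ) θ ∂P
        = ∫ θ, (P[(fun θ => φ (y θ)) * Λ | MeasurableSpace.comap y inferInstance]) θ ∂P := (integral_condExp hm).symm
    have h2 : ∫ θ, (P[(fun θ => φ (y θ)) * Λ | MeasurableSpace.comap y inferInstance]) θ ∂P
        = ∫ θ, φ (y θ) * lam (y θ) ∂P := by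
      refine integral_congr_ae ?_
      filter_upwards [hpull, hlam] with θ hθ hθ'
      simp only [Pi.mul_apply] at hθ ⊢
      rw [hθ, hθ']
    calc ∫ θ, Λ θ * φ (y θ) ∂P = ∫ θ, ((fun θ => φ (y θ)) * Λ) θ ∂P := by
          simp only [Pi.mul_apply]; simp_rw [mul_comm]
      _ = ∫ θ, φ (y θ) * lam (y θ) ∂P := h1.trans h2
      _ = ∫ θ, lam (y θ) * φ (y θ) ∂P := by simp_rw [mul_comm]
  -- the density
  set g : Ω → ℝ≥0∞ := fun ω => ENNReal.ofReal (lam ω) with hg_def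
  have hg_meas : Measurable g := ENNReal.measurable_ofReal.comp hlam_meas
  -- the law of v is the law of y weighted by the density lam
  have hve : P.map v = (P.map y).withDensity g := by
    refine ext_of_forall_lintegral_eq_of_IsFiniteMeasure fun f => ?_
    set F : BoundedContinuousFunction Ω ℝ :=
      BoundedContinuousFunction.comp _ isometry_subtype_coe.lipschitz f with hF_def
    set φ : Ω → ℝ := fun ω => (f ω : ℝ) with hφ_def
    have hφF : ∀ ω, F ω = φ ω := fun ω => rfl
    have hφ_cont : Continuous φ := NNReal.continuous_coe.comp f.continuous
    have hφ_nonneg : ∀ ω, 0 ≤ φ ω := fun ω => (f ω).coe_nonneg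
    have hC : ∀ ω, |φ ω| ≤ ‖F‖ := fun ω => by
      rw [← Real.norm_eq_abs, ← hφF ω]; exact F.norm_coe_le_norm ω
    have hφ_bdd : ∃ C, ∀ ω, |φ ω| ≤ C := ⟨‖F‖, hC⟩
    have hφ_meas : Measurable φ := hφ_cont.measurable
    -- integrability facts
    have hφv_int : Integrable (fun θ => φ (v θ)) P := by
      refine Integrable.mono' (integrable_const ‖F‖)
        ((hφ_meas.comp hv).aestronglyMeasurable) ?_
      exact Filter.Eventually.of_forall fun θ => by
        rw [Real.norm_eq_abs]; exact hC (v θ)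
    have hlamφ_int : Integrable (fun θ => lam (y θ) * φ (y θ)) P := by
      have := hlamy_int.bdd_mul ((hφ_meas.comp hy).aestronglyMeasurable)
        (c := ‖F‖) (Filter.Eventually.of_forall fun θ => by rw [Real.norm_eq_abs]; exact hC (y θ))
      exact this.congr (Filter.Eventually.of_forall fun θ => mul_comm _ _)
    have hlamφ_nonneg : 0 ≤ᵐ[P] fun θ => lam (y θ) * φ (y θ) := by
      filter_upwards [hlamy_nonneg] with θ h
      exact mul_nonneg h (hφ_nonneg (y θ))
    -- LHS
    have hfv_int : Integrable (fun x => (f x : ℝ)) (P.map v) := by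
      rw [integrable_map_measure hφ_cont.aestronglyMeasurable hv.aemeasurable]
      exact hφv_int
    have hLHS : ∫⁻ x, (f x : ℝ≥0∞) ∂(P.map v)
        = ENNReal.ofReal (∫ θ, lam (y θ) * φ (y θ) ∂P) := by
      rw [lintegral_coe_eq_integral f hfv_int,
        integral_map hv.aemeasurable hφ_cont.aestronglyMeasurable]
      congr 1
      rw [← hgirsanov φ hφ_cont hφ_bdd]
      exact hkey φ hφ_meas hφ_bdd
    -- RHS
    have hf'_meas : Measurable fun x => (f x : ℝ≥0∞) :=
      measurable_coe_nnreal_ennreal.comp f.continuous.measurable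
    have hRHS : ∫⁻ x, (f x : ℝ≥0∞) ∂((P.map y).withDensity g)
        = ENNReal.ofReal (∫ θ, lam (y θ) * φ (y θ) ∂P) := by
      rw [lintegral_withDensity_eq_lintegral_mul (P.map y) hg_meas hf'_meas]
      simp only [Pi.mul_apply]
      rw [lintegral_map (f := fun a => g a * (f a : ℝ≥0∞)) (hg_meas.mul hf'_meas) hy,
        ofReal_integral_eq_lintegral_ofReal hlamφ_int hlamφ_nonneg]
      refine lintegral_congr_ae ?_
      filter_upwards [hlamy_nonneg] with θ h
      simp only [hg_def, hφ_def]
      rw [ENNReal.ofReal_mul h, ENNReal.ofReal_coe_nnreal]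
    rw [hLHS, hRHS]
  -- positivity of lam a.e. w.r.t. the law of y
  have hs_meas : MeasurableSet {ω | lam ω ≤ 0} := measurableSet_le hlam_meas measurable_const
  have hA_null : P (y ⁻¹' {ω | lam ω ≤ 0}) = 0 := by
    set A := y ⁻¹' {ω | lam ω ≤ 0} with hA_def
    have hA_m : MeasurableSet[MeasurableSpace.comap y inferInstance] A := ⟨{ω | lam ω ≤ 0}, hs_meas, rfl⟩
    have hA : MeasurableSet A := hm A hA_m
    have h1 : ∫ θ in A, Λ θ ∂P = ∫ θ in A, lam (y θ) ∂P := by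
      rw [← setIntegral_condExp hm hΛint hA_m]
      exact integral_congr_ae (ae_restrict_of_ae hlam)
    have h2 : ∫ θ in A, lam (y θ) ∂P ≤ 0 := by
      refine integral_nonpos_of_ae ?_
      filter_upwards [ae_restrict_mem hA] with θ hθ
      exact hθ
    have h3 : (0:ℝ) ≤ ∫ θ in A, Λ θ ∂P := integral_nonneg hΛnonneg
    have h4 : ∫ θ in A, Λ θ ∂P = 0 := le_antisymm (h1 ▸ h2) h3
    have h5 : Λ =ᵐ[P.restrict A] 0 :=
      (integral_eq_zero_iff_of_nonneg_ae
        (Filter.Eventually.of_forall hΛnonneg) hΛint.restrict).mp h4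
    have h6 : ∀ᵐ θ ∂(P.restrict A), False := by
      filter_upwards [h5, ae_restrict_of_ae hΛpos] with θ h h'
      simp only [Pi.zero_apply] at h
      exact absurd h h'.ne'
    have h7 : P.restrict A Set.univ = 0 := by
      simpa using h6
    rwa [Measure.restrict_apply_univ] at h7
  have hlam_pos : ∀ᵐ ω ∂(P.map y), 0 < lam ω := by
    rw [ae_iff]
    have : {ω | ¬ 0 < lam ω} = {ω | lam ω ≤ 0} := by ext ω; simp [not_lt]
    rw [this, Measure.map_apply hy hs_meas]
    exact hA_null
  have hg_ne_zero : ∀ᵐ ω ∂(P.map y), g ω ≠ 0 := by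
    filter_upwards [hlam_pos] with ω h
    simp only [hg_def, ne_eq, ENNReal.ofReal_eq_zero, not_le]
    exact h
  -- absolute continuity
  have ac1 : P.map v ≪ P.map y := by
    rw [hve]; exact withDensity_absolutelyContinuous _ _
  have ac2 : P.map y ≪ P.map v := by
    rw [hve]
    exact withDensity_absolutelyContinuous' hg_meas.aemeasurable hg_ne_zero
  -- Radon-Nikodym derivative of map v w.r.t. map y
  have hrn1 : (P.map v).rnDeriv (P.map y) =ᵐ[P.map y] g := by
    rw [hve]; exact Measure.rnDeriv_withDensity (P.map y) hg_meas
  -- Radon-Nikodym derivative of map y w.r.t. map v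
  have hrn2 : ∀ᵐ ω ∂(P.map y), (P.map y).rnDeriv (P.map v) ω
      = (ENNReal.ofReal (lam ω))⁻¹ := by
    have hinv := Measure.inv_rnDeriv ac2
    filter_upwards [hinv, hrn1] with ω h1 h2
    have h3 : ((P.map y).rnDeriv (P.map v) ω)⁻¹ = ENNReal.ofReal (lam ω) := h1.trans h2
    calc (P.map y).rnDeriv (P.map v) ω = (((P.map y).rnDeriv (P.map v) ω)⁻¹)⁻¹ :=
          (inv_inv _).symm
      _ = (ENNReal.ofReal (lam ω))⁻¹ := by rw [h3]
  -- pull back to P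
  have hrn2_meas : MeasurableSet {ω | (P.map y).rnDeriv (P.map v) ω
      = (ENNReal.ofReal (lam ω))⁻¹} :=
    MeasureTheory.StronglyMeasurable.measurableSet_eq_fun (Measure.measurable_rnDeriv _ _).stronglyMeasurable
      ((ENNReal.measurable_ofReal.comp hlam_meas).inv).stronglyMeasurable
  have hrn2' : ∀ᵐ θ ∂P, (P.map y).rnDeriv (P.map v) (y θ)
      = (ENNReal.ofReal (lam (y θ)))⁻¹ :=
    (ae_map_iff hy.aemeasurable hrn2_meas).mp hrn2
  refine ⟨⟨ac1, ac2⟩, hrn1, hlam_pos, ?_⟩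
  filter_upwards [hrn2', hlam] with θ h1 h2
  rw [h2]
  exact h1
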